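/- For n ≥ 4, the norm on ℝⁿ whose unit ball is the Voronoï region of D_n is given by ‖x‖_P = max_{i≠j} (|x_i| + |x_j|). -/
import Mathlib

open Set Filter MeasureTheory Pointwise

/-- The lattice `Dₙ = {x ∈ ℤⁿ : ∑ xᵢ even}`. -/
def Dlat (n : ℕ) : Set (Fin n → ℝ) :=
  {x | (∀ i, ∃ m : ℤ, x i = (m : ℝ)) ∧ ∃ k : ℤ, ∑ i, x i = 2 * (k : ℝ)}

/-- The Voronoï region of `Dₙ`. -/
def VorDn (n : ℕ) : Set (Fin n → ℝ) :=
  {z | ∀ x ∈ Dlat n, ∑ i, (z i) ^ 2 ≤ ∑ i, (z i - x i) ^ 2}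

/-- The norm `‖x‖ = max_{i ≠ j} (|xᵢ| + |xⱼ|)` (whose unit ball is the Voronoï
region of `Dₙ`). -/
noncomputable def DnNorm (n : ℕ) (x : Fin n → ℝ) : ℝ :=
  sSup {r : ℝ | ∃ i j, i ≠ j ∧ r = |x i| + |x j|}

/-- The vertex set of the Voronoï region of `Dₙ`: the `2n` vectors `±eᵢ` and the
`2ⁿ` vectors `(±1/2, …, ±1/2)`. -/
def VPDn (n : ℕ) : Set (Fin n → ℝ) :=
  {v | ∃ i, v = Pi.single i (1 : ℝ) ∨ v = -Pi.single i (1 : ℝ)} ∪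
    {v | ∀ i, v i = 1 / 2 ∨ v i = -(1 / 2)}

lemma aux_pair {n : ℕ} {z : Fin n → ℝ} (hz : z ∈ VorDn n) {i j : Fin n} (hij : i ≠ j)
    (ε δ : ℤ) (hε : ε = 1 ∨ ε = -1) (hδ : δ = 1 ∨ δ = -1) :
    (ε : ℝ) * z i + (δ : ℝ) * z j ≤ 1 := by
  set x : Fin n → ℝ := fun k => (if k = i then (ε:ℝ) else 0) + (if k = j then (δ:ℝ) else 0) with hx
  have hxk : ∀ k, x k = (if k = i then (ε:ℝ) else 0) + (if k = j then (δ:ℝ) else 0) :=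
    fun k => rfl
  have hmem : x ∈ Dlat n := by
    constructor
    · intro k
      refine ⟨(if k = i then ε else 0) + (if k = j then δ else 0), ?_⟩
      simp [hxk, apply_ite (fun t : ℤ => (t:ℝ))]
    · have hsum : ∑ k, x k = (ε:ℝ) + δ := by
        simp [hxk, Finset.sum_add_distrib]
      refine ⟨(ε + δ)/2, ?_⟩
      rw [hsum]
      rcases hε with rfl | rfl <;> rcases hδ with rfl | rfl <;> norm_num
  have h := hz x hmem
  have h1 : ∑ k, (z k - x k)^2 = ∑ k, ((z k)^2 - 2 * z k * x k + (x k)^2) := by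
    apply Finset.sum_congr rfl; intro k _; ring
  have h3 : ∑ k, (x k)^2 = (ε:ℝ)^2 + (δ:ℝ)^2 := by
    have e : ∀ k, (x k)^2 = (if k = i then (ε:ℝ)^2 else 0) + (if k = j then (δ:ℝ)^2 else 0) := by
      intro k
      rw [hxk]
      by_cases h1 : k = i <;> by_cases h2 : k = j <;> simp_all <;> ring
    simp [e, Finset.sum_add_distrib]
  have h6 : ∑ k, 2 * z k * x k = 2 * (z i * ε + z j * δ) := by
    have e : ∀ k, 2 * z k * x k =
        (if k = i then 2 * z i * (ε:ℝ) else 0) + (if k = j then 2 * z j * (δ:ℝ) else 0) := by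
      intro k
      rw [hxk]
      by_cases h1 : k = i <;> by_cases h2 : k = j <;> simp_all <;> ring
    rw [Finset.sum_congr rfl (fun k _ => e k), Finset.sum_add_distrib]
    simp; ring
  have h4 : (ε:ℝ)^2 = 1 := by rcases hε with rfl | rfl <;> norm_num
  have h5 : (δ:ℝ)^2 = 1 := by rcases hδ with rfl | rfl <;> norm_num
  rw [h1, Finset.sum_add_distrib, Finset.sum_sub_distrib, h6, h3, h4, h5] at h
  nlinarith [h]

lemma int_abs_le_sq (m : ℤ) : |m| ≤ m^2 := by
  rcases eq_or_ne m 0 with rfl | h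
  · simp
  · nlinarith [Int.one_le_abs h, abs_nonneg m, sq_abs m]

lemma key_pointwise (m : ℤ) (c z : ℝ) (h : |z| ≤ c) :
    (1 - 2*c) * |(m:ℝ)| ≤ (m:ℝ)^2 - 2*z*(m:ℝ) := by
  have h1 : z * m ≤ c * |(m:ℝ)| := by
    calc z * m ≤ |z * m| := le_abs_self _
    _ = |z| * |(m:ℝ)| := abs_mul _ _
    _ ≤ c * |(m:ℝ)| := by apply mul_le_mul_of_nonneg_right h (abs_nonneg _)
  have h2 : |(m:ℝ)| ≤ (m:ℝ)^2 := by
    have := int_abs_le_sq m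
    calc |(m:ℝ)| = ((|m| : ℤ) : ℝ) := by push_cast; ring
    _ ≤ ((m^2 : ℤ) : ℝ) := by exact_mod_cast this
    _ = (m:ℝ)^2 := by push_cast; ring
  nlinarith

lemma key2 (m : ℤ) (a z : ℝ) (h : |z| ≤ a) :
    |(m:ℝ)|^2 - 2*a*|(m:ℝ)| ≤ (m:ℝ)^2 - 2*z*(m:ℝ) := by
  have h1 : z * m ≤ a * |(m:ℝ)| := by
    calc z * m ≤ |z * m| := le_abs_self _
    _ = |z| * |(m:ℝ)| := abs_mul _ _
    _ ≤ a * |(m:ℝ)| := mul_le_mul_of_nonneg_right h (abs_nonneg _)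
  nlinarith [sq_abs ((m:ℝ))]

lemma vor_of_pairs {n : ℕ} (hn : 2 ≤ n) {z : Fin n → ℝ}
    (h : ∀ i j, i ≠ j → |z i| + |z j| ≤ 1) : z ∈ VorDn n := by
  rintro x ⟨hint, k, hk⟩
  choose m hm using hint
  rw [← sub_nonneg, ← Finset.sum_sub_distrib]
  have expand : ∀ i ∈ Finset.univ, (z i - x i)^2 - z i ^2 = (m i:ℝ)^2 - 2 * z i * (m i:ℝ) := by
    intro i _; rw [hm]; ring
  rw [Finset.sum_congr rfl expand]
  by_cases hc : ∀ i, |z i| ≤ 1/2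
  · apply Finset.sum_nonneg
    intro i _
    have := key_pointwise (m i) (1/2) (z i) (hc i)
    norm_num at this
    linarith
  · push_neg at hc
    obtain ⟨i0, hi0⟩ := hc
    set a := |z i0| with ha
    have ha1 : a ≤ 1 := by
      have : Nontrivial (Fin n) := Fin.nontrivial_iff_two_le.mpr hn
      obtain ⟨j, hj⟩ := exists_ne i0
      have := h j i0 hj
      have := abs_nonneg (z j)
      linarith
    have hother : ∀ i, i ≠ i0 → |z i| ≤ 1 - a := by
      intro i hi; have := h i i0 hi; linarith
    rw [← Finset.add_sum_erase _ _ (Finset.mem_univ i0)]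
    set M : ℤ := |m i0| with hM
    set T : ℤ := ∑ i ∈ Finset.univ.erase i0, |m i| with hT
    have hMT : Even (M + T) := by
      have h1 : M + T = ∑ i, |m i| := by
        rw [hM, hT]; exact Finset.add_sum_erase Finset.univ (fun i => |m i|) (Finset.mem_univ i0)
      have h2 : (∑ i, m i) = 2 * k := by
        have : ((∑ i, m i : ℤ) : ℝ) = ((2 * k : ℤ) : ℝ) := by
          push_cast
          rw [← hk]
          exact (Finset.sum_congr rfl fun i _ => (hm i).symm)
        exact_mod_cast this
      have h3 : Even (∑ i, (|m i| - m i)) := by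
        apply Finset.even_sum
        intro i _
        rcases abs_choice (m i) with hh | hh
        · rw [hh]; simp
        · rw [hh]; exact ⟨-m i, by ring⟩
      rw [Finset.sum_sub_distrib, h2] at h3
      have h4 : Even ((2:ℤ) * k) := ⟨k, by ring⟩
      rw [h1]
      have := (Int.even_sub.mp h3).mpr h4
      exact this
    have hbound1 : ((M:ℝ))^2 - 2*a*(M:ℝ) ≤ (m i0:ℝ)^2 - 2 * z i0 * (m i0:ℝ) := by
      have := key2 (m i0) a (z i0) (le_of_eq ha.symm)
      have hcast : |(m i0:ℝ)| = (M:ℝ) := by rw [hM]; push_cast; ring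
      rw [hcast] at this
      exact this
    have hbound2 : (2*a - 1) * (T:ℝ) ≤ ∑ i ∈ Finset.univ.erase i0, ((m i:ℝ)^2 - 2 * z i * (m i:ℝ)) := by
      have : ∀ i ∈ Finset.univ.erase i0, (2*a-1) * |(m i:ℝ)| ≤ (m i:ℝ)^2 - 2 * z i * (m i:ℝ) := by
        intro i hi
        have hi' : i ≠ i0 := Finset.ne_of_mem_erase hi
        have := key_pointwise (m i) (1 - a) (z i) (hother i hi')
        calc (2*a-1) * |(m i:ℝ)| = (1 - 2*(1-a)) * |(m i:ℝ)| := by ring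
        _ ≤ _ := this
      have hTc : ((T:ℤ):ℝ) = ∑ i ∈ Finset.univ.erase i0, |(m i:ℝ)| := by
        rw [hT]; push_cast; rfl
      calc (2*a-1) * (T:ℝ) = ∑ i ∈ Finset.univ.erase i0, (2*a-1) * |(m i:ℝ)| := by
            rw [hTc, Finset.mul_sum]
      _ ≤ _ := Finset.sum_le_sum this
    have hM0 : (0:ℝ) ≤ (M:ℝ) := by rw [hM]; push_cast; positivity
    have hT0 : (0:ℝ) ≤ (T:ℝ) := by
      rw [hT]; push_cast; apply Finset.sum_nonneg; intro i _; positivity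
    have hMnn : 0 ≤ M := by rw [hM]; exact abs_nonneg _
    have hTnn : 0 ≤ T := by rw [hT]; exact Finset.sum_nonneg fun i _ => abs_nonneg _
    have hcase : M = 0 ∨ M = 1 ∨ 2 ≤ M := by omega
    have hfinal : (0:ℝ) ≤ ((M:ℝ))^2 - 2*a*(M:ℝ) + (2*a - 1) * (T:ℝ) := by
      rcases hcase with h0 | h1 | h2
      · rw [h0]; push_cast; nlinarith
      · have hT1 : 1 ≤ T := by obtain ⟨c, hc⟩ := hMT; omega
        have hT1' : (1:ℝ) ≤ (T:ℝ) := by exact_mod_cast hT1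
        rw [h1]; push_cast; nlinarith
      · have h2' : (2:ℝ) ≤ (M:ℝ) := by exact_mod_cast h2
        nlinarith
    linarith

lemma mem_vorDn_iff {n : ℕ} (hn : 2 ≤ n) (z : Fin n → ℝ) :
    z ∈ VorDn n ↔ ∀ i j, i ≠ j → |z i| + |z j| ≤ 1 := by
  constructor
  · intro hz i j hij
    have h1 := aux_pair hz hij 1 1 (Or.inl rfl) (Or.inl rfl)
    have h2 := aux_pair hz hij 1 (-1) (Or.inl rfl) (Or.inr rfl)
    have h3 := aux_pair hz hij (-1) 1 (Or.inr rfl) (Or.inl rfl)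
    have h4 := aux_pair hz hij (-1) (-1) (Or.inr rfl) (Or.inr rfl)
    push_cast at h1 h2 h3 h4
    rcases abs_cases (z i) with ⟨ei, _⟩ | ⟨ei, _⟩ <;>
      rcases abs_cases (z j) with ⟨ej, _⟩ | ⟨ej, _⟩ <;> rw [ei, ej] <;> linarith
  · exact vor_of_pairs hn

lemma dnNorm_bddAbove {n : ℕ} (x : Fin n → ℝ) :
    BddAbove {r : ℝ | ∃ i j, i ≠ j ∧ r = |x i| + |x j|} := by
  apply Set.Finite.bddAbove
  apply Set.Finite.subset (Set.finite_range (fun p : Fin n × Fin n => |x p.1| + |x p.2|))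
  rintro r ⟨i, j, _, rfl⟩
  exact ⟨(i, j), rfl⟩

theorem norm_voronoi_Dn (n : ℕ) (hn : 4 ≤ n) (x : Fin n → ℝ) :
    sInf {l : ℝ | 0 ≤ l ∧ x ∈ l • VorDn n} = DnNorm n x := by
  have hn2 : 2 ≤ n := by omega
  set N := DnNorm n x with hN
  have i0 : Fin n := ⟨0, by omega⟩
  have i1 : Fin n := ⟨1, by omega⟩
  have hi01 : (⟨0, by omega⟩ : Fin n) ≠ ⟨1, by omega⟩ := by
    intro h; exact absurd (Fin.mk.injEq _ _ _ _ ▸ h) (by simp)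
  have hSne : {r : ℝ | ∃ i j, i ≠ j ∧ r = |x i| + |x j|}.Nonempty :=
    ⟨_, ⟨_, _, hi01, rfl⟩⟩
  have hle : ∀ i j, i ≠ j → |x i| + |x j| ≤ N :=
    fun i j hij => le_csSup (dnNorm_bddAbove x) ⟨i, j, hij, rfl⟩
  have hNle : ∀ l : ℝ, (∀ i j, i ≠ j → |x i| + |x j| ≤ l) → N ≤ l := by
    intro l hl
    apply csSup_le hSne
    rintro r ⟨i, j, hij, rfl⟩
    exact hl i j hij
  have hN0 : 0 ≤ N := by
    have := hle _ _ hi01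
    have h1 : (0:ℝ) ≤ |x ⟨0, by omega⟩| + |x ⟨1, by omega⟩| := by positivity
    linarith
  have hzero_mem : (0 : Fin n → ℝ) ∈ VorDn n := by
    intro y _
    have h1 : ∑ i, ((0 : Fin n → ℝ) i)^2 = 0 := by simp
    rw [h1]
    apply Finset.sum_nonneg
    intro i _
    positivity
  have hset : {l : ℝ | 0 ≤ l ∧ x ∈ l • VorDn n} = Set.Ici N := by
    ext l
    simp only [Set.mem_setOf_eq, Set.mem_Ici]
    constructor
    · rintro ⟨hl0, z, hz, hzx⟩
      apply hNle
      intro i j hij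
      have hzij := (mem_vorDn_iff hn2 z).mp hz i j hij
      have hxi : x i = l * z i := by rw [← hzx]; simp
      have hxj : x j = l * z j := by rw [← hzx]; simp
      rw [hxi, hxj, abs_mul, abs_mul, abs_of_nonneg hl0]
      calc l * |z i| + l * |z j| = l * (|z i| + |z j|) := by ring
      _ ≤ l * 1 := mul_le_mul_of_nonneg_left hzij hl0
      _ = l := mul_one l
    · intro hNl
      have hl0 : 0 ≤ l := le_trans hN0 hNl
      refine ⟨hl0, ?_⟩
      rcases eq_or_lt_of_le hl0 with rfl | hlpos
      · -- l = 0 : then N = 0 and x = 0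
        have hNzero : N = 0 := le_antisymm hNl hN0
        have hx0 : x = 0 := by
          funext i
          obtain ⟨j, hj⟩ : ∃ j, j ≠ i := by
            rcases eq_or_ne i ⟨0, by omega⟩ with rfl | h
            · exact ⟨⟨1, by omega⟩, hi01.symm⟩
            · exact ⟨⟨0, by omega⟩, fun hh => h hh.symm⟩
          have := hle i j (fun hh => hj hh.symm)
          have h1 : (0:ℝ) ≤ |x i| := abs_nonneg _
          have h2 : (0:ℝ) ≤ |x j| := abs_nonneg _
          have h3 : |x i| = 0 := by rw [hNzero] at this; linarith
          simpa using abs_eq_zero.mp h3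
        rw [hx0, Set.zero_smul_set ⟨0, hzero_mem⟩]
        rfl
      · refine ⟨l⁻¹ • x, ?_, ?_⟩
        · rw [mem_vorDn_iff hn2]
          intro i j hij
          have h1 : |(l⁻¹ • x) i| + |(l⁻¹ • x) j| = l⁻¹ * (|x i| + |x j|) := by
            simp [abs_mul, abs_of_nonneg (inv_nonneg.mpr hl0)]; ring
          rw [h1]
          rw [inv_mul_le_iff₀ hlpos, mul_one]
          exact le_trans (hle i j hij) hNl
        · show l • (l⁻¹ • x) = x
          exact smul_inv_smul₀ (ne_of_gt hlpos) x
  rw [hset, csInf_Ici]
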